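/- Let G = (V,E) be a finite simple graph and u ∈ V such that N̄[u] = {u} ∪ {v ≠ u : {u,v} ∉ E} is an independent set, and let C be a minimum proper coloring (optimal partition into independent sets) of G[N(u)]. Then C together with the additional color class N̄[u] forms a minimum proper coloring of G. -/
import Mathlib

open SimpleGraph

theorem stmt_8 {V : Type*} [Fintype V] (G : SimpleGraph V) (u : V)
    (hbar : (insert u {v : V | v ≠ u ∧ ¬ G.Adj u v}).Pairwise fun a b => ¬ G.Adj a b)
    (𝒞 : Set (Set V))
    (hcover : ⋃₀ 𝒞 = G.neighborSet u)
    (hdisj : 𝒞.PairwiseDisjoint id)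
    (hind : ∀ I ∈ 𝒞, I.Pairwise fun a b => ¬ G.Adj a b)
    (hmin : (𝒞.ncard : ℕ∞) = (G.induce (G.neighborSet u)).chromaticNumber) :
    ⋃₀ (insert (insert u {v : V | v ≠ u ∧ ¬ G.Adj u v}) 𝒞) = Set.univ ∧
    (insert (insert u {v : V | v ≠ u ∧ ¬ G.Adj u v}) 𝒞).PairwiseDisjoint id ∧
    (∀ I ∈ insert (insert u {v : V | v ≠ u ∧ ¬ G.Adj u v}) 𝒞,
      I.Pairwise fun a b => ¬ G.Adj a b) ∧
    ((insert (insert u {v : V | v ≠ u ∧ ¬ G.Adj u v}) 𝒞).ncard : ℕ∞) =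
      G.chromaticNumber := by
  classical
  set A : Set V := insert u {v : V | v ≠ u ∧ ¬ G.Adj u v} with hA
  have huA : u ∈ A := Set.mem_insert _ _
  have hAmem : ∀ v, v ∈ A ↔ ¬ G.Adj u v := by
    intro v
    constructor
    · intro hv
      rcases Set.mem_insert_iff.1 hv with rfl | ⟨_, h⟩
      · exact G.irrefl
      · exact h
    · intro h
      by_cases hv : v = u
      · exact hv ▸ huA
      · exact Set.mem_insert_of_mem _ ⟨hv, h⟩
  have hsub : ∀ I ∈ 𝒞, I ⊆ G.neighborSet u := fun I hI =>
    hcover ▸ Set.subset_sUnion_of_mem hI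
  -- Part 1 : cover
  have h1 : ⋃₀ (insert A 𝒞) = Set.univ := by
    rw [Set.sUnion_insert, hcover]
    ext v
    simp only [Set.mem_union, Set.mem_univ, iff_true, SimpleGraph.mem_neighborSet]
    by_cases h : G.Adj u v
    · exact Or.inr h
    · exact Or.inl ((hAmem v).2 h)
  -- Part 2 : disjointness
  have hdisjAN : ∀ I ∈ 𝒞, Disjoint A I := by
    intro I hI
    refine Set.disjoint_left.2 fun v hv hvI => ?_
    exact (hAmem v).1 hv (hsub I hI hvI)
  have h2 : (insert A 𝒞).PairwiseDisjoint id := by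
    intro s hs t ht hst
    rcases Set.mem_insert_iff.1 hs with rfl | hs
    · rcases Set.mem_insert_iff.1 ht with rfl | ht
      · exact absurd rfl hst
      · exact hdisjAN t ht
    · rcases Set.mem_insert_iff.1 ht with rfl | ht
      · exact (hdisjAN s hs).symm
      · exact hdisj hs ht hst
  -- Part 3 : independence
  have h3 : ∀ I ∈ insert A 𝒞, I.Pairwise fun a b => ¬ G.Adj a b := by
    intro I hI
    rcases Set.mem_insert_iff.1 hI with rfl | hI
    · exact hbar
    · exact hind I hI
  -- counting
  have hAnot : A ∉ 𝒞 := by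
    intro hmem
    exact (hAmem u).1 huA (hsub A hmem huA)
  have hcard : (insert A 𝒞).ncard = 𝒞.ncard + 1 :=
    Set.ncard_insert_of_notMem hAnot (Set.toFinite 𝒞)
  set n := 𝒞.ncard with hn
  -- the induced graph is colorable with n colors
  have hcol' : (G.induce (G.neighborSet u)).Colorable n :=
    chromaticNumber_le_iff_colorable.1 (le_of_eq hmin.symm)
  -- upper bound : G is colorable with n+1 colors
  obtain ⟨C'⟩ := hcol'
  have hcolG : G.Colorable (n + 1) := by
    have hvalid : ∀ {v w : V}, G.Adj v w →
        (fun v => if h : v ∈ G.neighborSet u then some (C' ⟨v, h⟩) else none) v ≠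
        (fun v => if h : v ∈ G.neighborSet u then some (C' ⟨v, h⟩) else none) w := by
      intro v w hvw
      by_cases hv : v ∈ G.neighborSet u <;> by_cases hw : w ∈ G.neighborSet u <;>
        simp only [dif_pos, dif_neg, hv, hw]
      · intro hsome
        have : C' ⟨v, hv⟩ ≠ C' ⟨w, hw⟩ := C'.valid hvw
        exact this (Option.some_injective _ hsome)
      · simp
      · simp
      · exact absurd hvw (hbar ((hAmem v).2 hv) ((hAmem w).2 hw) (G.ne_of_adj hvw))
    have C : G.Coloring (Option (Fin n)) := Coloring.mk _ hvalid
    simpa using C.colorable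
  -- lower bound
  set m := ENat.toNat G.chromaticNumber with hm
  have hcolm : G.Colorable m := G.colorable_chromaticNumber_of_fintype
  have hχG : G.chromaticNumber = (m : ℕ∞) := by
    rw [hm, ENat.coe_toNat]
    exact chromaticNumber_ne_top_iff_exists.2 ⟨_, G.colorable_of_fintype⟩
  obtain ⟨D⟩ := hcolm
  have hm1 : 1 ≤ m := Fin.pos_iff_nonempty.2 ⟨D u⟩
  have hcol'' : (G.induce (G.neighborSet u)).Colorable (m - 1) := by
    have C2 : (G.induce (G.neighborSet u)).Coloring {c : Fin m // c ≠ D u} := by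
      refine Coloring.mk (fun v => ⟨D v.1, ?_⟩) ?_
      · intro h
        exact (D.valid v.2.symm) h
      · intro v w hvw h
        exact D.valid hvw (by simpa using congrArg Subtype.val h)
    have := C2.colorable
    rwa [Fintype.card_subtype_compl, Fintype.card_fin, Fintype.card_unique] at this
  have hnm : n ≤ m - 1 := by
    have := hcol''.chromaticNumber_le
    rw [← hmin, Nat.cast_le] at this
    exact this
  have hmn : m ≤ n + 1 := by
    have := hcolG.chromaticNumber_le
    rw [hχG, Nat.cast_le] at this
    exact this
  have hmeq : m = n + 1 := by omega
  refine ⟨h1, h2, h3, ?_⟩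
  rw [hcard, hχG, hmeq]
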